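/- Let L ∈ ℂ[z,1/z] be a self-conjugate Laurent polynomial and suppose L = A ∘ L₁, where A ∈ ℂ[z] is a nonconstant polynomial and L₁ = ∑_{i=−n}^{n} c_i z^i is a Laurent polynomial with n ≥ 1, c_n ≠ 0, and c_{−n} = 1/c_n. Then the leading coefficient of A is real and |c_n| = |c_{−n}| = 1. -/

import Mathlib

open Polynomial LaurentPolynomial

/-- A complex Laurent polynomial is self-conjugate if `conj (cᵢ) = c₋ᵢ` for all
`i ∈ ℤ`. -/
def SelfConjL (L : LaurentPolynomial ℂ) : Prop :=
  ∀ i : ℤ, (starRingEnd ℂ) (L.coeff i) = L.coeff (-i)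

/-- **Lemma on extreme coefficients.** Let `L = A ∘ L₁` be a decomposition of a
self-conjugate Laurent polynomial `L`, where `A ∈ ℂ[z]` is nonconstant and
`L₁ = ∑_{i=-n}^{n} cᵢ zⁱ` with `n ≥ 1`, `cₙ ≠ 0` and `c₋ₙ = 1/cₙ`. Then the leading
coefficient of `A` is real and `|cₙ| = |c₋ₙ| = 1`. -/

lemma coeff_mul' (f g : LaurentPolynomial ℂ) (x : ℤ) :
    (f * g).coeff x = ∑ a₁ ∈ f.coeff.support, f.coeff a₁ * g.coeff (x - a₁) := by
  rw [AddMonoidAlgebra.mul_apply, Finsupp.sum]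
  refine Finset.sum_congr rfl fun a₁ _ => ?_
  rw [Finsupp.sum]
  simp only [← eq_sub_iff_add_eq']
  rw [Finset.sum_ite_eq' g.coeff.support (x - a₁) (fun a₂ => f.coeff a₁ * g.coeff a₂)]
  split
  · rfl
  · next h => rw [Finsupp.notMem_support_iff.mp h, mul_zero]

lemma mul_top {f g : LaurentPolynomial ℂ} {a b : ℤ}
    (hf : ∀ i, a < i → f.coeff i = 0) (hg : ∀ i, b < i → g.coeff i = 0) :
    (f * g).coeff (a + b) = f.coeff a * g.coeff b ∧ ∀ i, a + b < i → (f * g).coeff i = 0 := by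
  constructor
  · rw [coeff_mul']
    rcases eq_or_ne (f.coeff a) 0 with h0 | h0
    · rw [h0, zero_mul]
      refine Finset.sum_eq_zero fun a₁ h1 => ?_
      rcases lt_trichotomy a₁ a with hlt | heq | hgt
      · rw [hg _ (by omega), mul_zero]
      · rw [heq, h0, zero_mul]
      · rw [hf _ hgt, zero_mul]
    · rw [Finset.sum_eq_single_of_mem a (Finsupp.mem_support_iff.mpr h0)]
      · rw [add_sub_cancel_left]
      · intro a₁ _ hne
        rcases lt_trichotomy a₁ a with hlt | heq | hgt
        · rw [hg _ (by omega), mul_zero]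
        · exact absurd heq hne
        · rw [hf _ hgt, zero_mul]
  · intro i hi
    rw [coeff_mul']
    refine Finset.sum_eq_zero fun a₁ _ => ?_
    rcases le_or_gt a₁ a with hle | hgt
    · rw [hg _ (by omega), mul_zero]
    · rw [hf _ hgt, zero_mul]

lemma mul_bot {f g : LaurentPolynomial ℂ} {a b : ℤ}
    (hf : ∀ i, i < a → f.coeff i = 0) (hg : ∀ i, i < b → g.coeff i = 0) :
    (f * g).coeff (a + b) = f.coeff a * g.coeff b ∧ ∀ i, i < a + b → (f * g).coeff i = 0 := by
  constructor
  · rw [coeff_mul']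
    rcases eq_or_ne (f.coeff a) 0 with h0 | h0
    · rw [h0, zero_mul]
      refine Finset.sum_eq_zero fun a₁ h1 => ?_
      rcases lt_trichotomy a₁ a with hlt | heq | hgt
      · rw [hf _ hlt, zero_mul]
      · rw [heq, h0, zero_mul]
      · rw [hg _ (by omega), mul_zero]
    · rw [Finset.sum_eq_single_of_mem a (Finsupp.mem_support_iff.mpr h0)]
      · rw [add_sub_cancel_left]
      · intro a₁ _ hne
        rcases lt_trichotomy a₁ a with hlt | heq | hgt
        · rw [hf _ hlt, zero_mul]
        · exact absurd heq hne
        · rw [hg _ (by omega), mul_zero]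
  · intro i hi
    rw [coeff_mul']
    refine Finset.sum_eq_zero fun a₁ _ => ?_
    rcases le_or_gt a a₁ with hle | hlt
    · rw [hg _ (by omega), mul_zero]
    · rw [hf _ hlt, zero_mul]

lemma pow_top {f : LaurentPolynomial ℂ} {a : ℤ}
    (hf : ∀ i, a < i → f.coeff i = 0) (k : ℕ) :
    (f ^ k).coeff (a * k) = (f.coeff a) ^ k ∧ ∀ i, a * k < i → (f ^ k).coeff i = 0 := by
  induction k with
  | zero =>
    simp only [pow_zero, Nat.cast_zero, mul_zero]
    constructor
    · show (1 : LaurentPolynomial ℂ).coeff 0 = 1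
      rw [AddMonoidAlgebra.one_def, AddMonoidAlgebra.coeff_single, Finsupp.single_eq_same]
    · intro i hi
      show (1 : LaurentPolynomial ℂ).coeff i = 0
      rw [AddMonoidAlgebra.one_def, AddMonoidAlgebra.coeff_single, Finsupp.single_apply, if_neg (by omega)]
  | succ k ih =>
    have h := mul_top hf ih.2
    push_cast
    rw [mul_add, mul_one]
    constructor
    · rw [pow_succ, mul_comm (f^k), show a * k + a = a + a * k by ring, h.1, ih.1,
        pow_succ, mul_comm]
    · intro i hi
      rw [pow_succ, mul_comm (f^k)]
      exact h.2 i (by omega)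

lemma pow_bot {f : LaurentPolynomial ℂ} {a : ℤ}
    (hf : ∀ i, i < a → f.coeff i = 0) (k : ℕ) :
    (f ^ k).coeff (a * k) = (f.coeff a) ^ k ∧ ∀ i, i < a * k → (f ^ k).coeff i = 0 := by
  induction k with
  | zero =>
    simp only [pow_zero, Nat.cast_zero, mul_zero]
    constructor
    · show (1 : LaurentPolynomial ℂ).coeff 0 = 1
      rw [AddMonoidAlgebra.one_def, AddMonoidAlgebra.coeff_single, Finsupp.single_eq_same]
    · intro i hi
      show (1 : LaurentPolynomial ℂ).coeff i = 0
      rw [AddMonoidAlgebra.one_def, AddMonoidAlgebra.coeff_single, Finsupp.single_apply, if_neg (by omega)]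
  | succ k ih =>
    have h := mul_bot hf ih.2
    push_cast
    rw [mul_add, mul_one]
    constructor
    · rw [pow_succ, mul_comm (f^k), show a * k + a = a + a * k by ring, h.1, ih.1,
        pow_succ, mul_comm]
    · intro i hi
      rw [pow_succ, mul_comm (f^k)]
      exact h.2 i (by omega)

theorem leadingCoeff_real_of_selfConjugate_decomposition
    (L L₁ : LaurentPolynomial ℂ) (A : ℂ[X])
    (hA : 1 ≤ A.natDegree)
    (n : ℕ) (hn : 1 ≤ n)
    (hsupp : ∀ i : ℤ, ((n : ℤ) < i ∨ i < -(n : ℤ)) → L₁.coeff i = 0)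
    (hcn : L₁.coeff (n : ℤ) ≠ 0)
    (hinv : L₁.coeff (-(n : ℤ)) = 1 / L₁.coeff (n : ℤ))
    (hsc : SelfConjL L)
    (h : L = Polynomial.aeval L₁ A) :
    (A.leadingCoeff).im = 0 ∧
      ‖L₁.coeff (n : ℤ)‖ = 1 ∧ ‖L₁.coeff (-(n : ℤ))‖ = 1 := by
  have hA0 : A ≠ 0 := fun h0 => by simp [h0] at hA
  set d := A.natDegree with hd
  have hlc : A.leadingCoeff ≠ 0 := leadingCoeff_ne_zero.mpr hA0
  have hf : ∀ i, (n : ℤ) < i → L₁.coeff i = 0 := fun i hi => hsupp i (Or.inl hi)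
  have hf' : ∀ i, i < -(n : ℤ) → L₁.coeff i = 0 := fun i hi => hsupp i (Or.inr hi)
  set c := L₁.coeff (n : ℤ) with hc
  have key : ∀ x : ℤ, L.coeff x = ∑ k ∈ Finset.range (d + 1), A.coeff k * (L₁ ^ k).coeff x := by
    intro x
    rw [h, aeval_eq_sum_range L₁, AddMonoidAlgebra.coeff_sum, Finset.sum_apply' x]
    exact Finset.sum_congr rfl fun k _ => by rw [AddMonoidAlgebra.coeff_smul, Finsupp.smul_apply, smul_eq_mul]
  have hnd : (0:ℤ) < (n : ℤ) := by exact_mod_cast hn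
  have hLtop : L.coeff ((n : ℤ) * d) = A.leadingCoeff * c ^ d := by
    rw [key, Finset.sum_eq_single_of_mem d (Finset.self_mem_range_succ d)]
    · rw [(pow_top hf d).1, Polynomial.leadingCoeff]
    · intro k hk hne
      rw [(pow_top hf k).2 ((n : ℤ) * d) ?_, mul_zero]
      have : (k : ℤ) < d := by
        have := Finset.mem_range.mp hk; omega
      exact mul_lt_mul_of_pos_left this hnd
  have hLbot : L.coeff (-(n : ℤ) * d) = A.leadingCoeff * (L₁.coeff (-(n : ℤ))) ^ d := by
    rw [key, Finset.sum_eq_single_of_mem d (Finset.self_mem_range_succ d)]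
    · rw [(pow_bot hf' d).1, Polynomial.leadingCoeff]
    · intro k hk hne
      rw [(pow_bot hf' k).2 (-(n : ℤ) * d) ?_, mul_zero]
      have hkd : (k : ℤ) < d := by
        have := Finset.mem_range.mp hk; omega
      nlinarith
  have eq1 : (starRingEnd ℂ) (A.leadingCoeff * c ^ d) =
      A.leadingCoeff * (1 / c) ^ d := by
    have := hsc ((n : ℤ) * d)
    rw [hLtop, show -((n:ℤ) * d) = -(n:ℤ) * d by ring, hLbot, hinv] at this
    exact this
  have habs : ‖c‖ = 1 := by
    have h2 := congrArg norm eq1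
    simp only [norm_mul, norm_pow, norm_div, norm_one, Complex.norm_conj] at h2
    have h3 : ‖c‖ ^ d = (1 / ‖c‖) ^ d :=
      mul_left_cancel₀ (by simpa using hlc) h2
    have hr0 : 0 < ‖c‖ := by simpa using hcn
    have h4 : ‖c‖ ^ d * ‖c‖ ^ d = 1 := by
      nth_rewrite 1 [h3]
      rw [← mul_pow, one_div_mul_cancel hr0.ne', one_pow]
    rcases lt_trichotomy (‖c‖) 1 with h1 | h1 | h1
    · exact absurd h4 (by nlinarith [pow_lt_one₀ hr0.le h1 (by omega : d ≠ 0), pow_pos hr0 d])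
    · exact h1
    · exact absurd h4 (by nlinarith [one_lt_pow₀ h1 (by omega : d ≠ 0), pow_pos hr0 d])
  refine ⟨?_, habs, by rw [hinv, norm_div, norm_one, habs]; norm_num⟩
  have hconjc : (starRingEnd ℂ) c = 1 / c := by
    rw [one_div, Complex.inv_def]
    simp [Complex.normSq_eq_norm_sq, habs]
  have hne : ((1 : ℂ) / c) ^ d ≠ 0 := pow_ne_zero _ (by simpa using hcn)
  have eq2 : (starRingEnd ℂ) A.leadingCoeff * (1 / c) ^ d =
      A.leadingCoeff * (1 / c) ^ d := by
    rw [← eq1, map_mul, map_pow, hconjc]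
  have : (starRingEnd ℂ) A.leadingCoeff = A.leadingCoeff :=
    mul_right_cancel₀ hne eq2
  exact Complex.conj_eq_iff_im.mp this
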